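/- For every integer k ≥ 2 and every real γ > 0, the Marchenko–Pastur moments satisfy the Catalan-type recurrence β(k,γ) = (1+γ)·β(k−1,γ) + γ·Σ_{a=1}^{k−2} β(a,γ)·β(k−a−1,γ). -/

import Mathlib

open Finset

/-- The `k`-th moment of the Marchenko–Pastur distribution with ratio parameter `γ`:
`β(k,γ) = Σ_{r=0}^{k−1} (1/(r+1))·binom(k,r)·binom(k−1,r)·γ^r`. -/
noncomputable def mpMoment (k : ℕ) (γ : ℝ) : ℝ :=
  ∑ r ∈ Finset.range k, (1 / ((r : ℝ) + 1)) * (Nat.choose k r : ℝ) *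
    (Nat.choose (k - 1) r : ℝ) * γ ^ r

namespace MPaux
noncomputable def cc (a b : ℕ) : ℝ :=
  (1 / ((b : ℝ) + 1)) * (Nat.choose a b : ℝ) * (Nat.choose (a - 1) b : ℝ)
lemma cc_zero {a b : ℕ} (h1 : 1 ≤ a) (h : a ≤ b) : cc a b = 0 := by
  have : a - 1 < b := by omega
  simp [cc, Nat.choose_eq_zero_of_lt this]
lemma cc_diag (a : ℕ) : cc (a + 1) a = 1 := by
  have h1 : (a + 1).choose a = a + 1 := Nat.choose_succ_self_right a
  have h2 : (a + 1 - 1).choose a = 1 := by simp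
  rw [cc, h1, h2]
  push_cast
  field_simp
lemma cc_sub2 (a : ℕ) : cc (a + 2) a = ((a : ℝ) + 2) * ((a : ℝ) + 1) / 2 := by
  have h1 : (a + 2).choose a = (a + 2).choose 2 := by
    have := Nat.choose_symm (n := a + 2) (k := 2) (by omega)
    simpa using this
  have h2 : (a + 2 - 1).choose a = a + 1 := by
    simpa using Nat.choose_succ_self_right a
  rw [cc, h1, h2, Nat.cast_choose_two]
  push_cast [show a + 2 - 1 = a + 1 by omega]
  field_simp
  ring
lemma factR (n : ℕ) : ((n + 1).factorial : ℝ) = ((n : ℝ) + 1) * (n.factorial : ℝ) := by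
  rw [Nat.factorial_succ]; push_cast; ring
lemma fact_ne (n : ℕ) : ((n.factorial : ℕ) : ℝ) ≠ 0 := Nat.cast_ne_zero.mpr (Nat.factorial_ne_zero n)

lemma cc_cast {a b : ℕ} (x : ℕ) (hx : a = b + 1 + x) :
    cc a b = ((a.factorial : ℝ) * (((b + x).factorial : ℕ) : ℝ)) /
      (((b : ℝ) + 1) * (b.factorial : ℝ) * (b.factorial : ℝ) *
        ((x + 1).factorial : ℝ) * (x.factorial : ℝ)) := by
  have h1 : b ≤ a := by omega
  have h2 : b ≤ a - 1 := by omega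
  rw [cc, Nat.cast_choose ℝ h1, Nat.cast_choose ℝ h2,
    show a - b = x + 1 by omega, show a - 1 = b + x by omega,
    show b + x - b = x by omega]
  field_simp

set_option maxHeartbeats 1000000 in
lemma key (m r : ℕ) :
    ((m : ℝ) + 4) * cc (m + 3) r + ((m : ℝ) + 1) * cc (m + 1) r
      - 2 * ((m : ℝ) + 1) * (if r = 0 then 0 else cc (m + 1) (r - 1))
      + ((m : ℝ) + 1) * (if r = 0 then 0 else if r - 1 = 0 then 0 else cc (m + 1) (r - 1 - 1))
      = (2 * (m : ℝ) + 5) * cc (m + 2) r + (2 * (m : ℝ) + 5) * (if r = 0 then 0 else cc (m + 2) (r - 1)) := by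
  match r with
  | 0 =>
    simp only [if_pos rfl]
    simp [cc]
    ring
  | 1 =>
    simp only [show (1:ℕ) - 1 = 0 from rfl, if_neg one_ne_zero, if_pos rfl]
    have c1 : ∀ a : ℕ, cc (a + 1) 1 = ((a : ℝ) + 1) * (a : ℝ) / 2 := by
      intro a
      rw [cc, Nat.choose_one_right, show a + 1 - 1 = a from rfl, Nat.choose_one_right]
      push_cast; ring
    have c0 : ∀ a : ℕ, cc (a + 1) 0 = 1 := by
      intro a; simp [cc]
    rw [show m + 3 = (m + 2) + 1 from rfl, c1, c0,
      show m + 2 = (m + 1) + 1 from rfl, c1, c0, show m + 1 = m + 0 + 1 from rfl, c1]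
    push_cast; ring
  | (s + 2) =>
    simp only [show s + 2 - 1 = s + 1 from rfl, show s + 1 - 1 = s from rfl,
      if_neg (Nat.succ_ne_zero _)]
    -- goal now in terms of cc with explicit indices
    by_cases h1 : s + 2 ≤ m
    · obtain ⟨t, rfl⟩ : ∃ t, m = s + 2 + t := ⟨m - (s + 2), by omega⟩
      have F5 : (((s + t + 5).factorial : ℕ) : ℝ)
          = ((s : ℝ) + (t : ℝ) + 5) * ((s : ℝ) + (t : ℝ) + 4) * ((s : ℝ) + (t : ℝ) + 3)
            * (((s + t + 2).factorial : ℕ) : ℝ) := by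
        rw [show s + t + 5 = (s + t + 4) + 1 by omega, factR,
          show s + t + 4 = (s + t + 3) + 1 by omega, factR,
          show s + t + 3 = (s + t + 2) + 1 by omega, factR]
        push_cast; ring
      have F4 : (((s + t + 4).factorial : ℕ) : ℝ)
          = ((s : ℝ) + (t : ℝ) + 4) * ((s : ℝ) + (t : ℝ) + 3) * (((s + t + 2).factorial : ℕ) : ℝ) := by
        rw [show s + t + 4 = (s + t + 3) + 1 by omega, factR,
          show s + t + 3 = (s + t + 2) + 1 by omega, factR]
        push_cast; ring
      have F3 : (((s + t + 3).factorial : ℕ) : ℝ)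
          = ((s : ℝ) + (t : ℝ) + 3) * (((s + t + 2).factorial : ℕ) : ℝ) := by
        rw [show s + t + 3 = (s + t + 2) + 1 by omega, factR]
        push_cast; ring
      have S2 : (((s + 2).factorial : ℕ) : ℝ)
          = ((s : ℝ) + 2) * ((s : ℝ) + 1) * ((s.factorial : ℕ) : ℝ) := by
        rw [show s + 2 = (s + 1) + 1 by omega, factR, factR]
        push_cast; ring
      have S1 : (((s + 1).factorial : ℕ) : ℝ) = ((s : ℝ) + 1) * ((s.factorial : ℕ) : ℝ) := by
        rw [factR]
      have T3 : (((t + 2 + 1).factorial : ℕ) : ℝ)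
          = ((t : ℝ) + 3) * ((t : ℝ) + 2) * ((t : ℝ) + 1) * ((t.factorial : ℕ) : ℝ) := by
        rw [show t + 2 + 1 = (t + 2) + 1 by omega, factR,
          show t + 2 = (t + 1) + 1 by omega, factR, factR]
        push_cast; ring
      have T2 : (((t + 2).factorial : ℕ) : ℝ)
          = ((t : ℝ) + 2) * ((t : ℝ) + 1) * ((t.factorial : ℕ) : ℝ) := by
        rw [show t + 2 = (t + 1) + 1 by omega, factR, factR]
        push_cast; ring
      have T1 : (((t + 1).factorial : ℕ) : ℝ) = ((t : ℝ) + 1) * ((t.factorial : ℕ) : ℝ) := by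
        rw [factR]
      have hS := fact_ne s
      have hT := fact_ne t
      have hST := fact_ne (s + t + 2)
      have p1 : (s : ℝ) + 1 ≠ 0 := by positivity
      have p2 : (s : ℝ) + 2 ≠ 0 := by positivity
      have p3 : (s : ℝ) + 3 ≠ 0 := by positivity
      have q1 : (t : ℝ) + 1 ≠ 0 := by positivity
      have q2 : (t : ℝ) + 2 ≠ 0 := by positivity
      have q3 : (t : ℝ) + 3 ≠ 0 := by positivity
      have A' : cc (s + 2 + t + 3) (s + 2) = (((s + t + 2).factorial : ℕ) : ℝ) ^ 2 *
          (((s : ℝ) + (t : ℝ) + 5) * ((s : ℝ) + (t : ℝ) + 4) * ((s : ℝ) + (t : ℝ) + 3) *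
            (((s : ℝ) + (t : ℝ) + 4) * ((s : ℝ) + (t : ℝ) + 3))) /
          (((s.factorial : ℕ) : ℝ) ^ 2 * ((t.factorial : ℕ) : ℝ) ^ 2 *
            (((s : ℝ) + 1) ^ 2 * ((s : ℝ) + 2) ^ 2 * ((s : ℝ) + 3) *
              ((t : ℝ) + 1) ^ 2 * ((t : ℝ) + 2) ^ 2 * ((t : ℝ) + 3))) := by
        rw [cc_cast (a := s + 2 + t + 3) (b := s + 2) (t + 2) (by omega),
          show s + 2 + t + 3 = s + t + 5 by omega,
          show (s + 2) + (t + 2) = s + t + 4 by omega, F5, F4, S2, T3]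
        try rw [T2]
        push_cast
        field_simp
        ring
      have B' : cc (s + 2 + t + 1) (s + 2) = (((s + t + 2).factorial : ℕ) : ℝ) ^ 2 *
          (((s : ℝ) + (t : ℝ) + 3) * ((t : ℝ) + 3) * ((t : ℝ) + 2) ^ 2 * ((t : ℝ) + 1)) /
          (((s.factorial : ℕ) : ℝ) ^ 2 * ((t.factorial : ℕ) : ℝ) ^ 2 *
            (((s : ℝ) + 1) ^ 2 * ((s : ℝ) + 2) ^ 2 * ((s : ℝ) + 3) *
              ((t : ℝ) + 1) ^ 2 * ((t : ℝ) + 2) ^ 2 * ((t : ℝ) + 3))) := by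
        rw [cc_cast (a := s + 2 + t + 1) (b := s + 2) t (by omega),
          show s + 2 + t + 1 = s + t + 3 by omega,
          show (s + 2) + t = s + t + 2 by omega, F3, S2]
        try rw [T1]
        push_cast
        field_simp
        ring
      have C' : cc (s + 2 + t + 1) (s + 1) = (((s + t + 2).factorial : ℕ) : ℝ) ^ 2 *
          (((s : ℝ) + (t : ℝ) + 3) * ((s : ℝ) + 3) * ((s : ℝ) + 2) * ((t : ℝ) + 3) * ((t : ℝ) + 2)) /
          (((s.factorial : ℕ) : ℝ) ^ 2 * ((t.factorial : ℕ) : ℝ) ^ 2 *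
            (((s : ℝ) + 1) ^ 2 * ((s : ℝ) + 2) ^ 2 * ((s : ℝ) + 3) *
              ((t : ℝ) + 1) ^ 2 * ((t : ℝ) + 2) ^ 2 * ((t : ℝ) + 3))) := by
        rw [cc_cast (a := s + 2 + t + 1) (b := s + 1) (t + 1) (by omega),
          show s + 2 + t + 1 = s + t + 3 by omega,
          show (s + 1) + (t + 1) = s + t + 2 by omega, F3, S1]
        try rw [T2]
        try rw [T1]
        push_cast
        field_simp
        ring
      have D' : cc (s + 2 + t + 1) s = (((s + t + 2).factorial : ℕ) : ℝ) ^ 2 *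
          (((s : ℝ) + (t : ℝ) + 3) * ((s : ℝ) + 3) * ((s : ℝ) + 2) ^ 2 * ((s : ℝ) + 1)) /
          (((s.factorial : ℕ) : ℝ) ^ 2 * ((t.factorial : ℕ) : ℝ) ^ 2 *
            (((s : ℝ) + 1) ^ 2 * ((s : ℝ) + 2) ^ 2 * ((s : ℝ) + 3) *
              ((t : ℝ) + 1) ^ 2 * ((t : ℝ) + 2) ^ 2 * ((t : ℝ) + 3))) := by
        rw [cc_cast (a := s + 2 + t + 1) (b := s) (t + 2) (by omega),
          show s + 2 + t + 1 = s + t + 3 by omega,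
          show s + (t + 2) = s + t + 2 by omega, F3, T3]
        try rw [T2]
        push_cast
        field_simp
      have E' : cc (s + 2 + t + 2) (s + 2) = (((s + t + 2).factorial : ℕ) : ℝ) ^ 2 *
          (((s : ℝ) + (t : ℝ) + 4) * ((s : ℝ) + (t : ℝ) + 3) * ((s : ℝ) + (t : ℝ) + 3) *
            ((t : ℝ) + 3) * ((t : ℝ) + 2)) /
          (((s.factorial : ℕ) : ℝ) ^ 2 * ((t.factorial : ℕ) : ℝ) ^ 2 *
            (((s : ℝ) + 1) ^ 2 * ((s : ℝ) + 2) ^ 2 * ((s : ℝ) + 3) *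
              ((t : ℝ) + 1) ^ 2 * ((t : ℝ) + 2) ^ 2 * ((t : ℝ) + 3))) := by
        rw [cc_cast (a := s + 2 + t + 2) (b := s + 2) (t + 1) (by omega),
          show s + 2 + t + 2 = s + t + 4 by omega,
          show (s + 2) + (t + 1) = s + t + 3 by omega, F4, F3, S2]
        try rw [T2]
        try rw [T1]
        push_cast
        field_simp
        ring
      have G' : cc (s + 2 + t + 2) (s + 1) = (((s + t + 2).factorial : ℕ) : ℝ) ^ 2 *
          (((s : ℝ) + (t : ℝ) + 4) * ((s : ℝ) + (t : ℝ) + 3) * ((s : ℝ) + (t : ℝ) + 3) *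
            ((s : ℝ) + 3) * ((s : ℝ) + 2)) /
          (((s.factorial : ℕ) : ℝ) ^ 2 * ((t.factorial : ℕ) : ℝ) ^ 2 *
            (((s : ℝ) + 1) ^ 2 * ((s : ℝ) + 2) ^ 2 * ((s : ℝ) + 3) *
              ((t : ℝ) + 1) ^ 2 * ((t : ℝ) + 2) ^ 2 * ((t : ℝ) + 3))) := by
        rw [cc_cast (a := s + 2 + t + 2) (b := s + 1) (t + 2) (by omega),
          show s + 2 + t + 2 = s + t + 4 by omega,
          show (s + 1) + (t + 2) = s + t + 3 by omega, F4, F3, S1, T3]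
        try rw [T2]
        push_cast
        field_simp
        ring
      have main : (((s : ℝ) + (t : ℝ) + 6) *
            (((s : ℝ) + (t : ℝ) + 5) * ((s : ℝ) + (t : ℝ) + 4) * ((s : ℝ) + (t : ℝ) + 3) *
              (((s : ℝ) + (t : ℝ) + 4) * ((s : ℝ) + (t : ℝ) + 3)))
          + ((s : ℝ) + (t : ℝ) + 3) *
            (((s : ℝ) + (t : ℝ) + 3) * ((t : ℝ) + 3) * ((t : ℝ) + 2) ^ 2 * ((t : ℝ) + 1))
          - 2 * ((s : ℝ) + (t : ℝ) + 3) *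
            (((s : ℝ) + (t : ℝ) + 3) * ((s : ℝ) + 3) * ((s : ℝ) + 2) * ((t : ℝ) + 3) * ((t : ℝ) + 2))
          + ((s : ℝ) + (t : ℝ) + 3) *
            (((s : ℝ) + (t : ℝ) + 3) * ((s : ℝ) + 3) * ((s : ℝ) + 2) ^ 2 * ((s : ℝ) + 1)))
          = (2 * ((s : ℝ) + (t : ℝ)) + 9) *
              (((s : ℝ) + (t : ℝ) + 4) * ((s : ℝ) + (t : ℝ) + 3) * ((s : ℝ) + (t : ℝ) + 3) *
                ((t : ℝ) + 3) * ((t : ℝ) + 2))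
            + (2 * ((s : ℝ) + (t : ℝ)) + 9) *
              (((s : ℝ) + (t : ℝ) + 4) * ((s : ℝ) + (t : ℝ) + 3) * ((s : ℝ) + (t : ℝ) + 3) *
                ((s : ℝ) + 3) * ((s : ℝ) + 2)) := by
        ring
      rw [A', B', C', D', E', G']
      push_cast
      linear_combination ((((s + t + 2).factorial : ℕ) : ℝ) ^ 2 /
          (((s.factorial : ℕ) : ℝ) ^ 2 * ((t.factorial : ℕ) : ℝ) ^ 2 *
            (((s : ℝ) + 1) ^ 2 * ((s : ℝ) + 2) ^ 2 * ((s : ℝ) + 3) *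
              ((t : ℝ) + 1) ^ 2 * ((t : ℝ) + 2) ^ 2 * ((t : ℝ) + 3)))) * main
    · by_cases h3 : m = s + 1
      · subst h3
        have A := cc_sub2 (s + 2)
        rw [show s + 2 + 2 = s + 1 + 3 by omega] at A
        have B : cc (s + 1 + 1) (s + 2) = 0 := cc_zero (by omega) (by omega)
        have Cq := cc_diag (s + 1)
        have D := cc_sub2 s
        rw [show s + 2 = s + 1 + 1 by omega] at D
        have E := cc_sub2 (s + 1)
        have G := cc_diag (s + 2)
        rw [show s + 2 + 1 = s + 1 + 2 by omega] at G
        rw [A, B, Cq, D, E, G]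
        push_cast
        ring
      · by_cases h4 : m = s
        · subst h4
          have z1 : cc (m + 1) (m + 2) = 0 := cc_zero (by omega) (by omega)
          have z2 : cc (m + 1) (m + 1) = 0 := cc_zero (by omega) (by omega)
          have z3 : cc (m + 2) (m + 2) = 0 := cc_zero (by omega) (by omega)
          have d1 : cc (m + 3) (m + 2) = 1 := by
            have := cc_diag (m + 2); simpa [show m + 2 + 1 = m + 3 by omega] using this
          have d2 : cc (m + 1) m = 1 := cc_diag m
          have d3 : cc (m + 2) (m + 1) = 1 := cc_diag (m + 1)
          rw [z1, z2, z3, d1, d2, d3]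
          ring
        · -- s ≥ m + 1 : everything vanishes
          have hms : m + 1 ≤ s := by omega
          have z1 : cc (m + 3) (s + 2) = 0 := cc_zero (by omega) (by omega)
          have z2 : cc (m + 1) (s + 2) = 0 := cc_zero (by omega) (by omega)
          have z3 : cc (m + 1) (s + 1) = 0 := cc_zero (by omega) (by omega)
          have z4 : cc (m + 1) s = 0 := cc_zero (by omega) (by omega)
          have z5 : cc (m + 2) (s + 2) = 0 := cc_zero (by omega) (by omega)
          have z6 : cc (m + 2) (s + 1) = 0 := cc_zero (by omega) (by omega)
          rw [z1, z2, z3, z4, z5, z6]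
          ring

lemma mp_eq_sum (k : ℕ) (γ : ℝ) : mpMoment k γ = ∑ r ∈ range k, cc k r * γ ^ r := by
  unfold mpMoment cc
  exact Finset.sum_congr rfl fun r _ => by ring

lemma mp_eq_sum' (k N : ℕ) (hk : 1 ≤ k) (h : k ≤ N) (γ : ℝ) :
    mpMoment k γ = ∑ r ∈ range N, cc k r * γ ^ r := by
  rw [mp_eq_sum]
  apply Finset.sum_subset (Finset.range_subset_range.2 h)
  intro x _ hx
  rw [cc_zero hk (by simpa using hx), zero_mul]

lemma sum_shift (n : ℕ) (a : ℕ → ℝ) (γ : ℝ) :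
    (∑ r ∈ range n, a r * γ ^ r) * γ
      = ∑ r ∈ range (n + 1), (if r = 0 then 0 else a (r - 1)) * γ ^ r := by
  rw [Finset.sum_range_succ', Finset.sum_mul]
  simp only [Nat.succ_ne_zero, if_false, Nat.add_sub_cancel, if_pos rfl, zero_mul, pow_zero,
    add_zero, reduceIte]
  exact Finset.sum_congr rfl fun i _ => by ring

lemma L1 (m : ℕ) (γ : ℝ) :
    ((m : ℝ) + 4) * mpMoment (m + 3) γ + ((m : ℝ) + 1) * mpMoment (m + 1) γ
      - 2 * ((m : ℝ) + 1) * (mpMoment (m + 1) γ * γ)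
      + ((m : ℝ) + 1) * (mpMoment (m + 1) γ * γ * γ)
      = (2 * (m : ℝ) + 5) * mpMoment (m + 2) γ + (2 * (m : ℝ) + 5) * (mpMoment (m + 2) γ * γ) := by
  have h3 : mpMoment (m + 3) γ = ∑ r ∈ range (m + 3), cc (m + 3) r * γ ^ r := mp_eq_sum _ _
  have h1 : mpMoment (m + 1) γ = ∑ r ∈ range (m + 3), cc (m + 1) r * γ ^ r :=
    mp_eq_sum' _ _ (by omega) (by omega) _
  have h2 : mpMoment (m + 2) γ = ∑ r ∈ range (m + 3), cc (m + 2) r * γ ^ r :=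
    mp_eq_sum' _ _ (by omega) (by omega) _
  have h1g : mpMoment (m + 1) γ * γ
      = ∑ r ∈ range (m + 3), (if r = 0 then 0 else cc (m + 1) (r - 1)) * γ ^ r := by
    rw [mp_eq_sum' (m + 1) (m + 2) (by omega) (by omega), sum_shift]
  have h1gg : mpMoment (m + 1) γ * γ * γ
      = ∑ r ∈ range (m + 3),
          (if r = 0 then 0 else if r - 1 = 0 then 0 else cc (m + 1) (r - 1 - 1)) * γ ^ r := by
    rw [mp_eq_sum' (m + 1) (m + 1) (by omega) (by omega), sum_shift, sum_shift]
  have h2g : mpMoment (m + 2) γ * γ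
      = ∑ r ∈ range (m + 3), (if r = 0 then 0 else cc (m + 2) (r - 1)) * γ ^ r := by
    rw [mp_eq_sum' (m + 2) (m + 2) (by omega) (by omega), sum_shift]
  rw [h1gg, h1g, h2g, h3, h1, h2, Finset.mul_sum, Finset.mul_sum, Finset.mul_sum,
    Finset.mul_sum, Finset.mul_sum, Finset.mul_sum, ← Finset.sum_add_distrib,
    ← Finset.sum_sub_distrib, ← Finset.sum_add_distrib, ← Finset.sum_add_distrib]
  exact Finset.sum_congr rfl fun r _ => by linear_combination γ ^ r * key m r

section PS
open PowerSeries

variable (γ : ℝ)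

lemma mp0 : mpMoment 0 γ = 0 := by simp [mpMoment]
lemma mp1 : mpMoment 1 γ = 1 := by simp [mpMoment]
lemma mp2 : mpMoment 2 γ = 1 + γ := by
  rw [mpMoment, Finset.sum_range_succ, Finset.sum_range_one]
  norm_num
lemma mp3 : mpMoment 3 γ = 1 + 3 * γ + γ ^ 2 := by
  rw [mpMoment, Finset.sum_range_succ, Finset.sum_range_succ, Finset.sum_range_one]
  norm_num [Nat.choose]

/-- generating series of the moments -/
noncomputable def fps : ℝ⟦X⟧ := PowerSeries.mk fun n => mpMoment n γ

noncomputable def bb : ℝ⟦X⟧ := (1 + C γ) * X - 1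

noncomputable def EE : ℝ⟦X⟧ := C γ * X * (fps γ) ^ 2 + bb γ * fps γ + X

noncomputable def PSI : ℝ⟦X⟧ :=
  X * (1 - 2 * (1 + C γ) * X + (1 - C γ) ^ 2 * X ^ 2) * (d⁄dX ℝ) (fps γ)
    - bb γ * fps γ - 2 * X

lemma c_one_add : (1 : ℝ⟦X⟧) + C γ = C (1 + γ) := by simp

lemma c_two_mul : C (2 * (1 + γ)) = (2 : ℝ⟦X⟧) * (1 + C γ) := by
  rw [map_mul, map_add, map_one, map_ofNat]

lemma c_sq : ((1 : ℝ⟦X⟧) - C γ) ^ 2 = C ((1 - γ) ^ 2) := by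
  rw [map_pow, map_sub, map_one]

lemma psi_eq : PSI γ
    = X * (d⁄dX ℝ) (fps γ) - C (2 * (1 + γ)) * (X ^ 2 * (d⁄dX ℝ) (fps γ))
      + C ((1 - γ) ^ 2) * (X ^ 3 * (d⁄dX ℝ) (fps γ))
      - C (1 + γ) * (X * fps γ) + fps γ - C 2 * X := by
  rw [PSI, bb, c_two_mul, ← c_sq, ← c_one_add, map_ofNat (C (R := ℝ)) 2]
  ring

lemma coeff_fps (n : ℕ) : coeff n (fps γ) = mpMoment n γ := by simp [fps]

lemma hPSI : PSI γ = 0 := by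
  ext n
  rw [psi_eq]
  rw [map_sub, map_add, map_sub, map_add, map_sub, coeff_C_mul, coeff_C_mul, coeff_C_mul,
    coeff_C_mul, map_zero]
  match n with
  | 0 =>
    simp [coeff_zero_eq_constantCoeff_apply, map_mul, fps, mp0]
  | 1 =>
    have t1 : coeff 1 (X * (d⁄dX ℝ) (fps γ)) = 1 := by
      rw [show (1:ℕ) = 0 + 1 from rfl, coeff_succ_X_mul, coeff_derivative, coeff_fps, mp1]
      norm_num
    have t2 : coeff 1 (X ^ 2 * (d⁄dX ℝ) (fps γ)) = 0 := by
      rw [coeff_X_pow_mul']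
      norm_num
    have t3 : coeff 1 (X ^ 3 * (d⁄dX ℝ) (fps γ)) = 0 := by
      rw [coeff_X_pow_mul']
      norm_num
    have t4 : coeff 1 (X * fps γ) = 0 := by
      rw [show (1:ℕ) = 0 + 1 from rfl, coeff_succ_X_mul, coeff_fps, mp0]
    rw [t1, t2, t3, t4, coeff_fps, mp1, coeff_one_X]
    ring
  | 2 =>
    have t1 : coeff 2 (X * (d⁄dX ℝ) (fps γ)) = (1 + γ) * 2 := by
      rw [show (2:ℕ) = 1 + 1 from rfl, coeff_succ_X_mul, coeff_derivative, coeff_fps, mp2]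
      norm_num
    have t2 : coeff 2 (X ^ 2 * (d⁄dX ℝ) (fps γ)) = 1 := by
      rw [show (2:ℕ) = 0 + 2 from rfl, coeff_X_pow_mul, coeff_derivative, coeff_fps, mp1]
      norm_num
    have t3 : coeff 2 (X ^ 3 * (d⁄dX ℝ) (fps γ)) = 0 := by
      rw [coeff_X_pow_mul']
      norm_num
    have t4 : coeff 2 (X * fps γ) = 1 := by
      rw [show (2:ℕ) = 1 + 1 from rfl, coeff_succ_X_mul, coeff_fps, mp1]
    have t5 : coeff 2 (X : ℝ⟦X⟧) = 0 := by
      rw [coeff_X, if_neg (by omega)]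
    rw [t1, t2, t3, t4, t5, coeff_fps, mp2]
    ring
  | (n + 3) =>
    have t1 : coeff (n + 3) (X * (d⁄dX ℝ) (fps γ)) = mpMoment (n + 3) γ * ((n : ℝ) + 3) := by
      rw [show n + 3 = (n + 2) + 1 from rfl, coeff_succ_X_mul, coeff_derivative, coeff_fps]
      push_cast; ring
    have t2 : coeff (n + 3) (X ^ 2 * (d⁄dX ℝ) (fps γ))
        = mpMoment (n + 2) γ * ((n : ℝ) + 2) := by
      rw [show n + 3 = (n + 1) + 2 from rfl, coeff_X_pow_mul, coeff_derivative, coeff_fps]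
      push_cast; ring
    have t3 : coeff (n + 3) (X ^ 3 * (d⁄dX ℝ) (fps γ))
        = mpMoment (n + 1) γ * ((n : ℝ) + 1) := by
      rw [show n + 3 = n + 3 from rfl, coeff_X_pow_mul, coeff_derivative, coeff_fps]
      try (push_cast; ring)
    have t4 : coeff (n + 3) (X * fps γ) = mpMoment (n + 2) γ := by
      rw [show n + 3 = (n + 2) + 1 from rfl, coeff_succ_X_mul, coeff_fps]
    have t5 : coeff (n + 3) (X : ℝ⟦X⟧) = 0 := by
      rw [coeff_X, if_neg (by omega)]
    rw [t1, t2, t3, t4, t5, coeff_fps]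
    linear_combination L1 n γ

lemma hMaster : (2 * C γ * X * fps γ + bb γ) * PSI γ
    = X * (1 - 2 * (1 + C γ) * X + (1 - C γ) ^ 2 * X ^ 2) * (d⁄dX ℝ) (EE γ)
      - ((1 - C γ) ^ 2 * X ^ 2 - 1) * EE γ := by
  have dE : (d⁄dX ℝ) (EE γ)
      = C γ * ((fps γ) ^ 2 + X * (2 * fps γ * (d⁄dX ℝ) (fps γ)))
        + ((1 + C γ) * (fps γ + X * (d⁄dX ℝ) (fps γ)) - (d⁄dX ℝ) (fps γ))
        + 1 := by
    rw [EE, bb]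
    rw [map_add, map_add]
    rw [show C γ * X * fps γ ^ 2 = C γ * (X * (fps γ * fps γ)) from by ring]
    rw [Derivation.leibniz, Derivation.leibniz, Derivation.leibniz,
      show ((1 + C γ) * X - 1) * fps γ = (1 + C γ) * (X * fps γ) - fps γ from by ring]
    rw [map_sub, Derivation.leibniz, Derivation.leibniz]
    simp [smul_eq_mul]
    ring
  rw [dE, PSI, EE, bb]
  ring

lemma EEnf : EE γ = C γ * (X * (fps γ * fps γ)) + C (1 + γ) * (X * fps γ) - fps γ + X := by
  rw [EE, bb, ← c_one_add]
  ring

lemma coeff_EE_succ (n : ℕ) : coeff (n + 1) (EE γ)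
    = γ * coeff n (fps γ * fps γ) + (1 + γ) * mpMoment n γ - mpMoment (n + 1) γ
      + (if n + 1 = 1 then 1 else 0) := by
  rw [EEnf, map_add, map_sub, map_add, coeff_C_mul, coeff_C_mul, coeff_succ_X_mul,
    coeff_succ_X_mul, coeff_fps, coeff_fps, coeff_X]

lemma hq1 : coeff 1 (EE γ) = 0 := by
  rw [show (1 : ℕ) = 0 + 1 from rfl, coeff_EE_succ]
  have : coeff 0 (fps γ * fps γ) = 0 := by
    rw [coeff_zero_eq_constantCoeff_apply, map_mul]
    simp [fps, mp0]
  rw [this, mp0, mp1]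
  norm_num

lemma coeff_sq_one : coeff 1 (fps γ * fps γ) = 0 := by
  rw [PowerSeries.coeff_mul, Finset.Nat.sum_antidiagonal_eq_sum_range_succ_mk,
    Finset.sum_range_succ, Finset.sum_range_one]
  simp [coeff_fps, mp0]

lemma hq2 : coeff 2 (EE γ) = 0 := by
  rw [show (2 : ℕ) = 1 + 1 from rfl, coeff_EE_succ, coeff_sq_one, mp1, mp2]
  norm_num

lemma hDE : X * (1 - 2 * (1 + C γ) * X + (1 - C γ) ^ 2 * X ^ 2) * (d⁄dX ℝ) (EE γ)
    = ((1 - C γ) ^ 2 * X ^ 2 - 1) * EE γ := by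
  have h := hMaster γ
  rw [hPSI, mul_zero] at h
  linear_combination -h

lemma hNF : X * (d⁄dX ℝ) (EE γ) - C (2 * (1 + γ)) * (X ^ 2 * (d⁄dX ℝ) (EE γ))
      + C ((1 - γ) ^ 2) * (X ^ 3 * (d⁄dX ℝ) (EE γ))
    = C ((1 - γ) ^ 2) * (X ^ 2 * EE γ) - EE γ := by
  rw [c_two_mul, ← c_sq]
  linear_combination hDE γ

lemma hRec (n : ℕ) : ((n : ℝ) + 4) * coeff (n + 3) (EE γ)
    = 2 * (1 + γ) * ((n : ℝ) + 2) * coeff (n + 2) (EE γ)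
      - (1 - γ) ^ 2 * (n : ℝ) * coeff (n + 1) (EE γ) := by
  have h := congrArg (coeff (R := ℝ) (n + 3)) (hNF γ)
  rw [map_sub, map_add, map_sub, coeff_C_mul, coeff_C_mul, coeff_C_mul] at h
  have t1 : coeff (n + 3) (X * (d⁄dX ℝ) (EE γ)) = coeff (n + 3) (EE γ) * ((n : ℝ) + 3) := by
    rw [show n + 3 = (n + 2) + 1 from rfl, coeff_succ_X_mul, coeff_derivative]
    push_cast; ring
  have t2 : coeff (n + 3) (X ^ 2 * (d⁄dX ℝ) (EE γ))
      = coeff (n + 2) (EE γ) * ((n : ℝ) + 2) := by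
    rw [show n + 3 = (n + 1) + 2 from rfl, coeff_X_pow_mul, coeff_derivative]
    push_cast; ring
  have t3 : coeff (n + 3) (X ^ 3 * (d⁄dX ℝ) (EE γ))
      = coeff (n + 1) (EE γ) * ((n : ℝ) + 1) := by
    rw [show n + 3 = n + 3 from rfl, coeff_X_pow_mul, coeff_derivative]
    try (push_cast; ring)
  have t4 : coeff (n + 3) (X ^ 2 * EE γ) = coeff (n + 1) (EE γ) := by
    rw [show n + 3 = (n + 1) + 2 from rfl, coeff_X_pow_mul]
  rw [t1, t2, t3, t4] at h
  linear_combination h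

lemma qzero : ∀ n : ℕ, coeff (n + 1) (EE γ) = 0 ∧ coeff (n + 2) (EE γ) = 0 := by
  intro n
  induction n with
  | zero => exact ⟨hq1 γ, hq2 γ⟩
  | succ n ih =>
    refine ⟨ih.2, ?_⟩
    have h := hRec γ n
    rw [ih.1, ih.2] at h
    have h4 : ((n : ℝ) + 4) ≠ 0 := by positivity
    have : ((n : ℝ) + 4) * coeff (n + 3) (EE γ) = 0 := by linarith
    rcases mul_eq_zero.mp this with h' | h'
    · exact absurd h' h4
    · exact h'

end PS
end MPaux


/-- For every integer `k ≥ 2` and every real `γ > 0`, the Marchenko–Pastur moments satisfy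
`β(k,γ) = (1+γ)·β(k−1,γ) + γ·Σ_{a=1}^{k−2} β(a,γ)·β(k−a−1,γ)`. -/
theorem mpMoment_recurrence (k : ℕ) (hk : 2 ≤ k) (γ : ℝ) (hγ : 0 < γ) :
    mpMoment k γ = (1 + γ) * mpMoment (k - 1) γ +
      γ * ∑ a ∈ Finset.Icc 1 (k - 2), mpMoment a γ * mpMoment (k - a - 1) γ := by

  obtain ⟨j, rfl⟩ : ∃ j, k = j + 2 := ⟨k - 2, by omega⟩
  have hq := (MPaux.qzero γ (j + 1)).1
  rw [MPaux.coeff_EE_succ, if_neg (by omega)] at hq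
  have hconv : PowerSeries.coeff (j + 1) (MPaux.fps γ * MPaux.fps γ)
      = ∑ a ∈ Finset.Icc 1 j, mpMoment a γ * mpMoment (j + 1 - a) γ := by
    rw [PowerSeries.coeff_mul, Finset.Nat.sum_antidiagonal_eq_sum_range_succ_mk,
      Finset.sum_range_succ, Finset.sum_range_succ']
    simp only [MPaux.coeff_fps, Nat.sub_self, MPaux.mp0, Nat.sub_zero, mul_zero, zero_mul,
      add_zero]
    rw [← Finset.Ico_add_one_right_eq_Icc, Finset.sum_Ico_eq_sum_range]
    refine Finset.sum_congr (by norm_num) fun i hi => ?_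
    rw [show 1 + i = i + 1 by omega]
  rw [hconv] at hq
  rw [show j + 2 - 1 = j + 1 by omega, show j + 2 - 2 = j by omega]
  have hsum : ∑ a ∈ Finset.Icc 1 j, mpMoment a γ * mpMoment (j + 2 - a - 1) γ
      = ∑ a ∈ Finset.Icc 1 j, mpMoment a γ * mpMoment (j + 1 - a) γ :=
    Finset.sum_congr rfl fun a ha => by
      rw [show j + 2 - a - 1 = j + 1 - a by omega]
  rw [hsum]
  linarith [hq]
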